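/- Let p ≥ 5 be a prime and let j be an integer with 0 ≤ j < p. Then C(p-1, j) ≡ (-1)^j * (1 - p*H_j) (mod p^2), where H_j is the j-th harmonic number. -/

import Mathlib

lemma sum_norm_le_one {p : ℕ} [Fact p.Prime] (s : Finset ℕ) (a : ℕ → ℚ_[p])
    (ha : ∀ i ∈ s, ‖a i‖ ≤ 1) : ‖∑ i ∈ s, a i‖ ≤ 1 := by
  classical
  induction s using Finset.induction_on with
  | empty => simp
  | @insert x s hx ih =>
    rw [Finset.sum_insert hx]
    refine le_trans (Padic.nonarchimedean _ _) (max_le ?_ ?_)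
    · exact ha x (Finset.mem_insert_self _ _)
    · exact ih fun i hi => ha i (Finset.mem_insert_of_mem hi)

lemma prod_aux {p : ℕ} [Fact p.Prime] (s : Finset ℕ) (a : ℕ → ℚ_[p])
    (ha : ∀ i ∈ s, ‖a i‖ ≤ 1) :
    ‖∏ i ∈ s, (1 - (p : ℚ_[p]) * a i) - (1 - (p : ℚ_[p]) * ∑ i ∈ s, a i)‖
      ≤ (p : ℝ) ^ (-2 : ℤ) := by
  classical
  have hp1 : (1 : ℝ) ≤ p := by exact_mod_cast (Fact.out : p.Prime).one_lt.le
  have hpos : (0 : ℝ) < (p : ℝ) ^ (-2 : ℤ) := by positivity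
  induction s using Finset.induction_on with
  | empty => simpa using hpos.le
  | @insert x s hx ih =>
    have hax : ‖a x‖ ≤ 1 := ha x (Finset.mem_insert_self _ _)
    have ha' : ∀ i ∈ s, ‖a i‖ ≤ 1 := fun i hi => ha i (Finset.mem_insert_of_mem hi)
    rw [Finset.prod_insert hx, Finset.sum_insert hx]
    set P := ∏ i ∈ s, (1 - (p : ℚ_[p]) * a i)
    set S := ∑ i ∈ s, a i
    have key : (1 - (p : ℚ_[p]) * a x) * P - (1 - (p : ℚ_[p]) * (a x + S))
        = (1 - (p : ℚ_[p]) * a x) * (P - (1 - (p : ℚ_[p]) * S))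
          + (p : ℚ_[p]) ^ 2 * (a x * S) := by ring
    rw [key]
    refine le_trans (Padic.nonarchimedean _ _) (max_le ?_ ?_)
    · rw [norm_mul]
      have h1 : ‖(1 : ℚ_[p]) - (p : ℚ_[p]) * a x‖ ≤ 1 := by
        rw [show (1 : ℚ_[p]) - (p : ℚ_[p]) * a x = 1 + (-((p : ℚ_[p]) * a x)) from by ring]
        refine le_trans (Padic.nonarchimedean _ _) (max_le (by simp) ?_)
        rw [norm_neg, norm_mul, Padic.norm_p]
        calc (p : ℝ)⁻¹ * ‖a x‖ ≤ (p:ℝ)⁻¹ * 1 := by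
              exact mul_le_mul_of_nonneg_left hax (by positivity)
          _ ≤ 1 := by rw [mul_one]; exact inv_le_one_of_one_le₀ hp1
      calc ‖(1 : ℚ_[p]) - (p : ℚ_[p]) * a x‖ * ‖P - (1 - (p : ℚ_[p]) * S)‖
          ≤ 1 * ((p : ℝ) ^ (-2 : ℤ)) := by
            exact mul_le_mul h1 (ih ha') (norm_nonneg _) zero_le_one
        _ = (p : ℝ) ^ (-2 : ℤ) := one_mul _
    · rw [norm_mul, norm_pow, Padic.norm_p, norm_mul]
      have hS : ‖S‖ ≤ 1 := sum_norm_le_one s a ha'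
      have : ‖a x‖ * ‖S‖ ≤ 1 := by
        calc ‖a x‖ * ‖S‖ ≤ 1 * 1 := mul_le_mul hax hS (norm_nonneg _) zero_le_one
          _ = 1 := one_mul 1
      calc ((p:ℝ)⁻¹) ^ 2 * (‖a x‖ * ‖S‖) ≤ ((p:ℝ)⁻¹) ^ 2 * 1 :=
            mul_le_mul_of_nonneg_left this (by positivity)
        _ = (p : ℝ) ^ (-2 : ℤ) := by
            rw [mul_one, ← zpow_natCast, inv_zpow, ← zpow_neg]
            norm_num

theorem stmt_12 (p : ℕ) [Fact p.Prime] (hp5 : 5 ≤ p) (j : ℕ) (hj : j < p) :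
    ‖(((((p - 1).choose j : ℚ)
        - (-1 : ℚ) ^ j * (1 - (p : ℚ) * ∑ i ∈ Finset.Icc 1 j, (1 / i : ℚ))) : ℚ) : ℚ_[p])‖
      ≤ (p : ℝ) ^ (-2 : ℤ) := by
  have hp : p.Prime := Fact.out
  -- choose identity in ℚ
  have key : ∀ k, k < p → ((p - 1).choose k : ℚ)
      = (-1 : ℚ) ^ k * ∏ i ∈ Finset.Icc 1 k, (1 - (p : ℚ) * (1 / i)) := by
    intro k
    induction k with
    | zero => simp
    | succ n ih =>
      intro hn
      have hn' : n < p := Nat.lt_of_succ_lt hn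
      have h1 : (1:ℕ) ≤ n + 1 := Nat.succ_le_succ (Nat.zero_le n)
      rw [Finset.prod_Icc_succ_top h1]
      have hc : (p - 1).choose (n + 1) * (n + 1) = (p - 1).choose n * ((p - 1) - n) :=
        Nat.choose_succ_right_eq _ _
      have hsub : ((p - 1 - n : ℕ) : ℚ) = (p : ℚ) - 1 - n := by
        have : n + 1 ≤ p - 1 := by omega
        push_cast [Nat.sub_sub]
        rw [Nat.cast_sub (by omega)]
        push_cast
        ring
      have hcq : ((p - 1).choose (n + 1) : ℚ) * (n + 1)
          = ((p - 1).choose n : ℚ) * ((p : ℚ) - 1 - n) := by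
        rw [← hsub]; exact_mod_cast hc
      have hne : ((n : ℚ) + 1) ≠ 0 := by positivity
      rw [ih hn'] at hcq
      have : ((p - 1).choose (n + 1) : ℚ)
          = (-1:ℚ)^n * (∏ i ∈ Finset.Icc 1 n, (1 - (p:ℚ) * (1/i))) * ((p:ℚ) - 1 - n) / (n+1) := by
        field_simp at hcq ⊢
        linarith [hcq]
      rw [this]
      push_cast
      field_simp
      ring
  rw [key j hj]
  rw [show (-1 : ℚ) ^ j * ∏ i ∈ Finset.Icc 1 j, (1 - (p : ℚ) * (1 / i))
      - (-1 : ℚ) ^ j * (1 - (p : ℚ) * ∑ i ∈ Finset.Icc 1 j, (1 / i : ℚ))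
    = (-1:ℚ)^j * ((∏ i ∈ Finset.Icc 1 j, (1 - (p : ℚ) * (1 / i)))
      - (1 - (p : ℚ) * ∑ i ∈ Finset.Icc 1 j, (1 / i : ℚ))) from by ring]
  push_cast
  rw [norm_mul]
  have hone : ‖((-1 : ℚ_[p])) ^ j‖ = 1 := by simp
  rw [hone, one_mul]
  have := prod_aux (p := p) (Finset.Icc 1 j) (fun i => ((i : ℚ_[p]))⁻¹) ?_
  · convert this using 3 <;> simp
  · intro i hi
    simp only [Finset.mem_Icc] at hi
    have hnd : ¬ (p : ℤ) ∣ (i : ℤ) := by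
      intro h
      have := Int.le_of_dvd (by exact_mod_cast hi.1) h
      omega
    have : ‖((i : ℤ) : ℚ_[p])‖ = 1 := by
      rcases (le_iff_lt_or_eq.mp (Padic.norm_int_le_one (p := p) i)) with h | h
      · exact absurd (Padic.norm_intCast_lt_one_iff.mp h) hnd
      · exact h
    rw [norm_inv]
    simp only [Int.cast_natCast] at this
    rw [this]; norm_num
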